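/- Suppose r : [0,∞) → [8,∞) is differentiable and satisfies r'(t) ≥ C₁ r(t)(log r(t) − C₀) for all t, with log r(0) ≥ 2C₀. Then log r(t) ≥ log r(0) · exp((C₁/2) t) for all t ≥ 0. -/

import Mathlib

open Real Set Filter

/-- The differential inequality `r' ≥ C₁ r (log r − C₀)` with `log r(0) ≥ 2C₀`
implies double-exponential growth of `r`. -/
theorem double_exp_growth_ode (C₀ C₁ : ℝ) (hC₀ : 0 ≤ C₀) (hC₁ : 0 < C₁)
    (r : ℝ → ℝ) (hr : ∀ t ≥ (0:ℝ), 8 ≤ r t) (hdiff : Differentiable ℝ r)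
    (hineq : ∀ t ≥ (0:ℝ), C₁ * (r t * (Real.log (r t) - C₀)) ≤ deriv r t)
    (h0 : 2 * C₀ ≤ Real.log (r 0)) :
    ∀ t ≥ (0:ℝ), Real.log (r 0) * Real.exp (C₁ / 2 * t) ≤ Real.log (r t) := by
  set L : ℝ → ℝ := fun t => Real.log (r t) with hLdef
  have hrpos : ∀ t ≥ (0:ℝ), 0 < r t := fun t ht => lt_of_lt_of_le (by norm_num) (hr t ht)
  -- derivative of L
  have hLderiv : ∀ t ≥ (0:ℝ), HasDerivAt L (deriv r t / r t) t := by
    intro t ht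
    have h := (Real.hasDerivAt_log (hrpos t ht).ne').comp t (hdiff t).hasDerivAt
    rw [div_eq_inv_mul]
    exact h
  -- key inequality on the derivative of L
  have key : ∀ t ≥ (0:ℝ), C₁ * (L t - C₀) ≤ deriv r t / r t := by
    intro t ht
    rw [le_div_iff₀ (hrpos t ht)]
    calc C₁ * (L t - C₀) * r t = C₁ * (r t * (L t - C₀)) := by ring
    _ ≤ deriv r t := hineq t ht
  -- continuity of L on [0, b]
  have hLcont : ∀ b : ℝ, ContinuousOn L (Icc 0 b) := by
    intro b t ht
    exact ((Real.continuousAt_log (hrpos t ht.1).ne').comp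
      (hdiff t).continuousAt).continuousWithinAt
  -- Step 1: L t ≥ 2 C₀ for all t ≥ 0, via Grönwall applied to 2C₀ - L
  have step1 : ∀ t ≥ (0:ℝ), 2 * C₀ ≤ L t := by
    intro t ht
    have H := le_gronwallBound_of_liminf_deriv_right_le
      (f := fun s => 2 * C₀ - L s) (f' := fun s => -(deriv r s / r s))
      (δ := 0) (K := C₁) (ε := 0) (a := 0) (b := t)
      (continuousOn_const.sub (hLcont t))
      (fun x hx r hr' =>
        ((hasDerivAt_const x (2*C₀)).sub
          (hLderiv x hx.1)).hasDerivWithinAt.liminf_right_slope_le (by simpa using hr'))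
      (show 2*C₀ - L 0 ≤ 0 by linarith)
      (fun x hx => by
        have hk := key x hx.1
        nlinarith [mul_nonneg hC₁.le hC₀])
      t (by constructor <;> linarith)
    rw [gronwallBound_ε0_δ0] at H
    have H' : 2 * C₀ - L t ≤ 0 := H
    linarith
  -- Step 2: Grönwall applied to -L with K = C₁/2
  intro t ht
  have H := le_gronwallBound_of_liminf_deriv_right_le
    (f := fun s => -L s) (f' := fun s => -(deriv r s / r s))
    (δ := -L 0) (K := C₁ / 2) (ε := 0) (a := 0) (b := t)
    ((hLcont t).neg)
    (fun x hx r hr' =>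
      ((hLderiv x hx.1).neg).hasDerivWithinAt.liminf_right_slope_le (by simpa using hr'))
    le_rfl
    (fun x hx => by
      have hk := key x hx.1
      have h2 := step1 x hx.1
      nlinarith)
    t (by constructor <;> linarith)
  rw [gronwallBound_ε0] at H
  have : -L 0 * Real.exp (C₁ / 2 * (t - 0)) = -(L 0 * Real.exp (C₁ / 2 * t)) := by
    ring_nf
  rw [this] at H
  have H' : -L t ≤ -(L 0 * Real.exp (C₁ / 2 * t)) := H
  linarith
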